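/- arXiv:1807.04129 — 3 statements merged into one kernel-verified Lean document; each statement's English description precedes it below -/
import Mathlib

section
/- (Fixed-point theorem for strong contraction mappings.) Let (X,d) be a nonempty complete bounded metric space and let T : X → X be a continuous map for which there exists q ∈ [0,1) such that, with X_0 = X and X_{i+1} = T(X_i), one has diam(X_{i+1}) ≤ q · diam(X_i) for all i. Then T admits a unique fixed point x* ∈ X, i.e. there exists exactly one x* ∈ X with T(x*) = x*. -/
/-- The iterated image sets: `iterImage T 0 = univ`, `iterImage T (i+1) = T '' iterImage T i`. -/
def iterImage {X : Type*} (T : X → X) : ℕ → Set X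
  | 0 => Set.univ
  | (i + 1) => T '' iterImage T i

lemma iterImage_eq {X : Type*} (T : X → X) (n : ℕ) :
    iterImage T n = T^[n] '' Set.univ := by
  induction n with
  | zero => simp [iterImage]
  | succ n ih =>
      rw [iterImage, ih, ← Set.image_comp, ← Function.iterate_succ']

lemma fixed_mem_iterImage {X : Type*} {T : X → X} {x : X} (hx : T x = x) (n : ℕ) :
    x ∈ iterImage T n := by
  induction n with
  | zero => trivial
  | succ n ih => exact ⟨x, ih, hx⟩

/-- fixed-point theorem for strong contraction mappings: a continuous strong
contraction mapping on a nonempty complete bounded metric space admits a unique fixed point. -/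
theorem strong_contraction_fixedPoint {X : Type*} [MetricSpace X] [CompleteSpace X] [Nonempty X]
    (hbdd : Bornology.IsBounded (Set.univ : Set X))
    (T : X → X) (hT : Continuous T)
    (hq : ∃ q : ℝ, 0 ≤ q ∧ q < 1 ∧
      ∀ i : ℕ, Metric.diam (iterImage T (i + 1)) ≤ q * Metric.diam (iterImage T i)) :
    ∃! xstar : X, T xstar = xstar := by
  obtain ⟨q, hq0, hq1, hcon⟩ := hq
  set D := Metric.diam (Set.univ : Set X) with hD
  have hDnn : 0 ≤ D := Metric.diam_nonneg
  have hbdd' : ∀ n, Bornology.IsBounded (iterImage T n) :=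
    fun n => hbdd.subset (Set.subset_univ _)
  have hdiam : ∀ n, Metric.diam (iterImage T n) ≤ q ^ n * D := by
    intro n
    induction n with
    | zero => simp [iterImage, hD]
    | succ n ih =>
        calc Metric.diam (iterImage T (n + 1)) ≤ q * Metric.diam (iterImage T n) := hcon n
        _ ≤ q * (q ^ n * D) := by
            exact mul_le_mul_of_nonneg_left ih hq0
        _ = q ^ (n + 1) * D := by ring
  have htend : Filter.Tendsto (fun n : ℕ => q ^ n * D) Filter.atTop (nhds 0) := by
    have := (tendsto_pow_atTop_nhds_zero_of_lt_one hq0 hq1).mul_const D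
    simpa using this
  obtain ⟨x0⟩ := ‹Nonempty X›
  have hmem : ∀ m n : ℕ, n ≤ m → T^[m] x0 ∈ iterImage T n := by
    intro m n hnm
    rw [iterImage_eq]
    exact ⟨T^[m - n] x0, trivial, by rw [← Function.iterate_add_apply, Nat.add_sub_cancel' hnm]⟩
  have hcauchy : CauchySeq (fun n => T^[n] x0) := by
    apply cauchySeq_of_le_tendsto_0 (fun n => q ^ n * D) _ htend
    intro n m N hn hm
    exact (Metric.dist_le_diam_of_mem (hbdd' N) (hmem n N hn) (hmem m N hm)).trans (hdiam N)
  obtain ⟨x, hx⟩ := cauchySeq_tendsto_of_complete hcauchy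
  have hfix : T x = x := by
    have h1 : Filter.Tendsto (fun n => T^[n + 1] x0) Filter.atTop (nhds (T x)) := by
      have := (hT.tendsto x).comp hx
      simpa [Function.comp_def, Function.iterate_succ_apply'] using this
    have h2 : Filter.Tendsto (fun n => T^[n + 1] x0) Filter.atTop (nhds x) :=
      hx.comp (Filter.tendsto_add_atTop_nat 1)
    exact tendsto_nhds_unique h1 h2
  refine ⟨x, hfix, fun y hy => ?_⟩
  have hle : ∀ n : ℕ, dist y x ≤ q ^ n * D := fun n =>
    (Metric.dist_le_diam_of_mem (hbdd' n) (fixed_mem_iterImage hy n)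
      (fixed_mem_iterImage hfix n)).trans (hdiam n)
  have : dist y x ≤ 0 := ge_of_tendsto' htend hle
  exact dist_le_zero.mp this
end

section
/- Let (X,d) be a nonempty complete bounded metric space and T : X → X a continuous map for which there exists q ∈ [0,1) such that, with X_0 = X and X_{i+1} = T(X_i), one has diam(X_{i+1}) ≤ q · diam(X_i) for all i. Then the limit of the iteration is independent of the initial point: for any x_0, y_0 ∈ X, the sequences T^n(x_0) and T^n(y_0) converge to the same point, namely the unique fixed point x* of T. -/
/-- for a continuous strong contraction mapping on a nonempty complete bounded
metric space, the iteration converges to the unique fixed point `x*` independently of the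
initial point: for any `x₀, y₀`, both `Tⁿ x₀` and `Tⁿ y₀` converge to `x*`. -/
theorem iterate_tendsto_fixedPoint {X : Type*} [MetricSpace X] [CompleteSpace X] [Nonempty X]
    (hbdd : Bornology.IsBounded (Set.univ : Set X))
    (T : X → X) (hT : Continuous T)
    (hq : ∃ q : ℝ, 0 ≤ q ∧ q < 1 ∧
      ∀ i : ℕ, Metric.diam (iterImage T (i + 1)) ≤ q * Metric.diam (iterImage T i)) :
    ∃ xstar : X, T xstar = xstar ∧ (∀ y : X, T y = y → y = xstar) ∧
      ∀ x₀ : X, Filter.Tendsto (fun n : ℕ => T^[n] x₀) Filter.atTop (nhds xstar) := by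
  obtain ⟨q, hq0, hq1, hd⟩ := hq
  set D := Metric.diam (Set.univ : Set X) with hD
  have hmem : ∀ (x : X) (n : ℕ), T^[n] x ∈ iterImage T n := by
    intro x n
    induction n with
    | zero => trivial
    | succ n ih =>
      rw [Function.iterate_succ_apply']
      exact ⟨_, ih, rfl⟩
  have hstep : ∀ n : ℕ, iterImage T (n + 1) ⊆ iterImage T n := by
    intro n
    induction n with
    | zero => exact Set.subset_univ _
    | succ n ih => exact Set.image_mono ih
  have hanti : Antitone (iterImage T) := antitone_nat_of_succ_le hstep
  have hbound : ∀ n : ℕ, Bornology.IsBounded (iterImage T n) :=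
    fun n => hbdd.subset (Set.subset_univ _)
  have hdiam : ∀ n : ℕ, Metric.diam (iterImage T n) ≤ q ^ n * D := by
    intro n
    induction n with
    | zero => simp [iterImage, hD]
    | succ n ih =>
      calc Metric.diam (iterImage T (n + 1)) ≤ q * Metric.diam (iterImage T n) := hd n
      _ ≤ q * (q ^ n * D) := by
          exact mul_le_mul_of_nonneg_left ih hq0
      _ = q ^ (n + 1) * D := by ring
  have hb0 : Filter.Tendsto (fun n : ℕ => q ^ n * D) Filter.atTop (nhds 0) := by
    have := (tendsto_pow_atTop_nhds_zero_of_lt_one hq0 hq1).mul_const D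
    simpa using this
  have hdistle : ∀ (x y : X) (N n m : ℕ), N ≤ n → N ≤ m →
      dist (T^[n] x) (T^[m] y) ≤ q ^ N * D := by
    intro x y N n m hn hm
    exact le_trans (Metric.dist_le_diam_of_mem (hbound N) (hanti hn (hmem x n))
      (hanti hm (hmem y m))) (hdiam N)
  have hcauchy : ∀ x : X, CauchySeq (fun n : ℕ => T^[n] x) := by
    intro x
    exact cauchySeq_of_le_tendsto_0 _ (fun n m N hn hm => hdistle x x N n m hn hm) hb0
  obtain ⟨xstar, hxstar⟩ := cauchySeq_tendsto_of_complete (hcauchy (Classical.arbitrary X))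
  have hall : ∀ x₀ : X, Filter.Tendsto (fun n : ℕ => T^[n] x₀) Filter.atTop (nhds xstar) := by
    intro x₀
    apply hxstar.congr_dist
    have h1 : ∀ n : ℕ, dist (T^[n] (Classical.arbitrary X)) (T^[n] x₀) ≤ q ^ n * D :=
      fun n => hdistle _ _ n n n le_rfl le_rfl
    exact squeeze_zero (fun n => dist_nonneg) h1 hb0
  have hfix : T xstar = xstar := by
    have h1 : Filter.Tendsto (fun n : ℕ => T^[n + 1] xstar) Filter.atTop (nhds (T xstar)) := by
      simp only [Function.iterate_succ_apply']
      exact (hT.continuousAt.tendsto).comp (hall xstar)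
    have h2 : Filter.Tendsto (fun n : ℕ => T^[n + 1] xstar) Filter.atTop (nhds xstar) :=
      (hall xstar).comp (Filter.tendsto_add_atTop_nat 1)
    exact tendsto_nhds_unique h1 h2
  refine ⟨xstar, hfix, ?_, hall⟩
  intro y hy
  have hconst : ∀ n : ℕ, T^[n] y = y := by
    intro n
    induction n with
    | zero => rfl
    | succ n ih => rw [Function.iterate_succ_apply', ih, hy]
  have := hall y
  simp only [hconst] at this
  exact tendsto_nhds_unique tendsto_const_nhds this
end

section
/- Let (X,d) be a nonempty complete bounded metric space and T : X → X a continuous map for which there exists q ∈ [0,1) such that, with X_0 = X and X_{i+1} = T(X_i), one has diam(X_{i+1}) ≤ q · diam(X_i) for all i, and let x* be the unique fixed point of T. Then the convergence rate estimate d(T^n(x_0), x*) ≤ q^n · diam(X) holds for every initial point x_0 ∈ X and every n ∈ ℕ. -/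
/-- convergence rate estimate `d(Tⁿ x₀, x*) ≤ qⁿ * diam X` towards the unique
fixed point `x*` of a continuous strong contraction mapping. -/
theorem dist_iterate_fixedPoint_le {X : Type*} [MetricSpace X] [CompleteSpace X] [Nonempty X]
    (hbdd : Bornology.IsBounded (Set.univ : Set X))
    (T : X → X) (hT : Continuous T) (q : ℝ) (hq0 : 0 ≤ q) (hq1 : q < 1)
    (hcontr : ∀ i : ℕ, Metric.diam (iterImage T (i + 1)) ≤ q * Metric.diam (iterImage T i))
    (xstar : X) (hfix : T xstar = xstar) (huniq : ∀ y : X, T y = y → y = xstar) :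
    ∀ (x₀ : X) (n : ℕ), dist (T^[n] x₀) xstar ≤ q ^ n * Metric.diam (Set.univ : Set X) := by
  intro x₀ n
  have hbn : ∀ m, Bornology.IsBounded (iterImage T m) :=
    fun m => hbdd.subset (Set.subset_univ _)
  have hmem : T^[n] x₀ ∈ iterImage T n := by
    induction n with
    | zero => exact Set.mem_univ _
    | succ k ih =>
      rw [Function.iterate_succ_apply']
      exact ⟨T^[k] x₀, ih, rfl⟩
  have hstar : ∀ m, xstar ∈ iterImage T m := by
    intro m
    induction m with
    | zero => exact Set.mem_univ _
    | succ k ih => exact ⟨xstar, ih, hfix⟩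
  have hdiam : ∀ m, Metric.diam (iterImage T m) ≤ q ^ m * Metric.diam (Set.univ : Set X) := by
    intro m
    induction m with
    | zero => simp [iterImage]
    | succ k ih =>
      calc Metric.diam (iterImage T (k + 1)) ≤ q * Metric.diam (iterImage T k) := hcontr k
        _ ≤ q * (q ^ k * Metric.diam (Set.univ : Set X)) := by
            exact mul_le_mul_of_nonneg_left ih hq0
        _ = q ^ (k + 1) * Metric.diam (Set.univ : Set X) := by ring
  exact le_trans (Metric.dist_le_diam_of_mem (hbn n) hmem (hstar n)) (hdiam n)
end
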